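/- Let F: X ⇉ Y be a set-valued mapping between locally convex topological vector spaces whose graph is convex. Then iri(gph F) ⊆ {(x, y) ∈ X × Y | x ∈ iri(dom F) and y ∈ iri(F(x))}. -/

import Mathlib

open Set Pointwise Filter Topology

/-- The cone generated by a set `A`: `{t • a | t ≥ 0, a ∈ A}`. -/
def coneGen {X : Type*} [AddCommGroup X] [Module ℝ X] (A : Set X) : Set X :=
  {y | ∃ t : ℝ, 0 ≤ t ∧ ∃ a ∈ A, y = t • a}

/-- A set is a linear subspace if it is the carrier of a submodule. -/
def IsLinSubspace {X : Type*} [AddCommGroup X] [Module ℝ X] (s : Set X) : Prop :=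
  ∃ L : Submodule ℝ X, (L : Set X) = s

/-- Intrinsic relative interior. -/
def iri {X : Type*} [AddCommGroup X] [Module ℝ X] (Ω : Set X) : Set X :=
  {x ∈ Ω | IsLinSubspace (coneGen ((fun y => y - x) '' Ω))}

/-- Quasi-relative interior. -/
def qri {X : Type*} [AddCommGroup X] [Module ℝ X] [TopologicalSpace X] (Ω : Set X) : Set X :=
  {x ∈ Ω | IsLinSubspace (closure (coneGen ((fun y => y - x) '' Ω)))}

/-- Relative interior in a topological vector space. -/
def ri {X : Type*} [AddCommGroup X] [Module ℝ X] [TopologicalSpace X] (Ω : Set X) : Set X :=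
  {x ∈ Ω | ∃ V ∈ nhds x, V ∩ closure ((affineSpan ℝ Ω : Set X)) ⊆ Ω}

/-- Normal cone (functional-analytic version), a subset of the topological dual. -/
def normalCone {X : Type*} [AddCommGroup X] [Module ℝ X] [TopologicalSpace X]
    (Ω : Set X) (xb : X) : Set (X →L[ℝ] ℝ) :=
  {f | ∀ x ∈ Ω, f (x - xb) ≤ 0}

/-- The graph of a set-valued mapping. -/
def gph {X Y : Type*} (F : X → Set Y) : Set (X × Y) := {p | p.2 ∈ F p.1}

/-- The domain of a set-valued mapping. -/
def domF {X Y : Type*} (F : X → Set Y) : Set X := {x | (F x).Nonempty}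

/-- for a convex set-valued mapping `F` between LCTV spaces,
`iri (gph F)` is contained in the set of `(x, y)` with `x ∈ iri (dom F)` and
`y ∈ iri (F x)`. -/
theorem iri_gph_subset {X Y : Type*} [AddCommGroup X] [Module ℝ X]
    [TopologicalSpace X] [IsTopologicalAddGroup X] [ContinuousSMul ℝ X]
    [LocallyConvexSpace ℝ X]
    [AddCommGroup Y] [Module ℝ Y]
    [TopologicalSpace Y] [IsTopologicalAddGroup Y] [ContinuousSMul ℝ Y]
    [LocallyConvexSpace ℝ Y]
    (F : X → Set Y) (hconv : Convex ℝ (gph F)) :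
    iri (gph F) ⊆ {p : X × Y | p.1 ∈ iri (domF F) ∧ p.2 ∈ iri (F p.1)} := by
  rintro ⟨xb, yb⟩ ⟨hp, L, hL⟩
  have hyb : yb ∈ F xb := hp
  constructor
  · refine ⟨⟨yb, hyb⟩, L.map (LinearMap.fst ℝ X Y), ?_⟩
    ext z
    constructor
    · rintro ⟨v, hv, rfl⟩
      rw [SetLike.mem_coe, ← SetLike.mem_coe, hL] at hv
      obtain ⟨t, ht, a, ⟨q, hq, rfl⟩, rfl⟩ := hv
      exact ⟨t, ht, q.1 - xb, ⟨q.1, ⟨q.2, hq⟩, rfl⟩, rfl⟩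
    · rintro ⟨t, ht, _, ⟨x, ⟨y, hy⟩, rfl⟩, rfl⟩
      refine ⟨t • ((x, y) - (xb, yb)), ?_, rfl⟩
      rw [SetLike.mem_coe, ← SetLike.mem_coe, hL]
      exact ⟨t, ht, (x, y) - (xb, yb), ⟨(x, y), hy, rfl⟩, rfl⟩
  · refine ⟨hyb, L.comap (LinearMap.inr ℝ X Y), ?_⟩
    ext z
    simp only [SetLike.mem_coe, Submodule.mem_comap, LinearMap.inr_apply]
    rw [← SetLike.mem_coe, hL]
    constructor
    · rintro ⟨t, ht, a, ⟨q, hq, rfl⟩, hz⟩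
      have h1 : (0 : X) = t • (q.1 - xb) := congrArg Prod.fst hz
      have h2 : z = t • (q.2 - yb) := congrArg Prod.snd hz
      rcases eq_or_lt_of_le ht with rfl | htpos
      · refine ⟨0, le_refl 0, yb - yb, ⟨yb, hyb, rfl⟩, ?_⟩
        simp [h2]
      · have hq1 : q.1 = xb := by
          have : q.1 - xb = 0 := by
            have := congrArg (fun v => t⁻¹ • v) h1
            simpa [smul_smul, inv_mul_cancel₀ (ne_of_gt htpos)] using this.symm
          exact sub_eq_zero.mp this
        exact ⟨t, ht, q.2 - yb, ⟨q.2, hq1 ▸ hq, rfl⟩, h2⟩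
    · rintro ⟨t, ht, _, ⟨y, hy, rfl⟩, rfl⟩
      refine ⟨t, ht, (xb, y) - (xb, yb), ⟨(xb, y), hy, rfl⟩, ?_⟩
      simp [Prod.smul_def, Prod.sub_def]
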